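/- Let L be a finite-dimensional Lie algebra over any field F, with nilradical N = N(L). Then C_L(N†(L)) = Z(N); in particular, C_L(N†(L)) ⊆ N†(L). -/

import Mathlib

namespace Paper

open LieAlgebra

section AlgDefs

variable (F : Type*) [Field F] (L : Type*) [LieRing L] [LieAlgebra F L]

/-- The nilradical of a Lie algebra: the largest nilpotent ideal (the sup of nilpotent ideals). -/
noncomputable def nilrad : LieIdeal F L :=
  sSup {I : LieIdeal F L | LieModule.IsNilpotent I I}

/-- The nilpotency class of a Lie algebra. -/
noncomputable def nilClass : ℕ := sInf {k | LieModule.lowerCentralSeries F L L k = ⊥}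

/-- A Lie algebra is nilregular if the field has characteristic zero, or characteristic `p > 0`
and its nilradical has nilpotency class less than `p - 1`. -/
noncomputable def Nilregular : Prop :=
  ringChar F = 0 ∨ nilClass F (nilrad F L) < ringChar F - 1

/-- A Lie algebra is solregular if the field has characteristic zero, or characteristic `p > 0`
and its radical has derived length less than `log₂ p`. -/
noncomputable def Solregular : Prop :=
  ringChar F = 0 ∨ 2 ^ LieAlgebra.derivedLength F (LieAlgebra.radical F L) < ringChar F

/-- Regular means nilregular or solregular. -/
noncomputable def Regular : Prop := Nilregular F L ∨ Solregular F L

end AlgDefs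

section IdealDefs

variable {F : Type*} [Field F] {L : Type*} [LieRing L] [LieAlgebra F L]

/-- The centraliser `C_L(I)` of an ideal `I`, as an ideal of `L`. -/
def centralizer (I : LieIdeal F L) : LieIdeal F L where
  carrier := {x : L | ∀ y ∈ I, ⁅x, y⁆ = 0}
  zero_mem' := by intro y hy; simp
  add_mem' := by intro a b ha hb y hy; rw [add_lie, ha y hy, hb y hy, add_zero]
  smul_mem' := by intro c x hx y hy; rw [smul_lie, hx y hy, smul_zero]
  lie_mem := by
    intro x m hm y hy
    have h1 : ⁅x, ⁅m, y⁆⁆ = (0 : L) := by rw [hm y hy, lie_zero]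
    have h2 : ⁅m, ⁅x, y⁆⁆ = (0 : L) := hm _ (I.lie_mem hy)
    show ⁅⁅x, m⁆, y⁆ = (0 : L)
    rw [lie_lie, h1, h2, sub_zero]

/-- The centre `Z(I)` of an ideal `I`, as an ideal of `L`. -/
def idealCenter (I : LieIdeal F L) : LieIdeal F L where
  carrier := {x : L | x ∈ I ∧ ∀ y ∈ I, ⁅x, y⁆ = 0}
  zero_mem' := ⟨I.zero_mem, by intro y hy; simp⟩
  add_mem' := by
    intro a b ha hb
    exact ⟨I.add_mem ha.1 hb.1, fun y hy => by rw [add_lie, ha.2 y hy, hb.2 y hy, add_zero]⟩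
  smul_mem' := by
    intro c x hx
    exact ⟨I.smul_mem c hx.1, fun y hy => by rw [smul_lie, hx.2 y hy, smul_zero]⟩
  lie_mem := by
    intro x m hm
    refine ⟨I.lie_mem hm.1, fun y hy => ?_⟩
    have h1 : ⁅x, ⁅m, y⁆⁆ = (0 : L) := by rw [hm.2 y hy, lie_zero]
    have h2 : ⁅m, ⁅x, y⁆⁆ = (0 : L) := hm.2 _ (I.lie_mem hy)
    show ⁅⁅x, m⁆, y⁆ = (0 : L)
    rw [lie_lie, h1, h2, sub_zero]

/-- The centraliser `C_L(A/B)` of a chief factor, as an ideal of `L`. -/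
def chiefCentralizer (A B : LieIdeal F L) : LieIdeal F L where
  carrier := {x : L | ∀ a ∈ A, ⁅x, a⁆ ∈ B}
  zero_mem' := by intro a ha; simp [B.zero_mem]
  add_mem' := by intro x y hx hy a ha; rw [add_lie]; exact B.add_mem (hx a ha) (hy a ha)
  smul_mem' := by intro c x hx a ha; rw [smul_lie]; exact B.smul_mem c (hx a ha)
  lie_mem := by
    intro x m hm a ha
    show ⁅⁅x, m⁆, a⁆ ∈ B
    rw [lie_lie]
    exact B.sub_mem (B.lie_mem (hm a ha)) (hm _ (A.lie_mem ha))

/-- `A/Z` is a minimal ideal of `L/Z` (via the ideal correspondence). -/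
def IsMinModIdeal (Z A : LieIdeal F L) : Prop :=
  Z < A ∧ ∀ B : LieIdeal F L, Z ≤ B → B ≤ A → B = Z ∨ B = A

/-- `A` is a minimal ideal of `L`. -/
def IsMinimalIdeal (A : LieIdeal F L) : Prop := IsMinModIdeal ⊥ A

/-- An ideal `A` of `L` is quasi-minimal if `A² = A` and `A/Z(A)` is a minimal ideal
of `L/Z(A)`. -/
def IsQuasiMinimal (A : LieIdeal F L) : Prop :=
  ⁅A, A⁆ = A ∧ IsMinModIdeal (idealCenter A) A

end IdealDefs

section MoreDefs

variable (F : Type*) [Field F] (L : Type*) [LieRing L] [LieAlgebra F L]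

/-- `E†(L)`: the subalgebra generated by the quasi-minimal components of `L`. -/
noncomputable def Edagger : LieSubalgebra F L :=
  LieSubalgebra.lieSpan F L (⋃ A ∈ {A : LieIdeal F L | IsQuasiMinimal A}, (A : Set L))

/-- `N†(L) = N(L) + E†(L)`: the quasi-minimal radical of `L`. -/
noncomputable def Ndagger : LieSubalgebra F L :=
  LieIdeal.toLieSubalgebra F L (nilrad F L) ⊔ Edagger F L

/-- The generalised nilradical `N*(L)`: the ideal containing `N = N(L)` with
`N*(L)/N` the sum of all minimal ideals of `L/N` contained in `(N + C_L(N))/N`. -/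
noncomputable def Nstar : LieIdeal F L :=
  nilrad F L ⊔ sSup {A : LieIdeal F L | IsMinModIdeal (nilrad F L) A ∧
    A ≤ nilrad F L ⊔ centralizer (nilrad F L)}

/-- The Frattini ideal: the largest ideal contained in every maximal subalgebra. -/
def frattini : LieIdeal F L :=
  sSup {I : LieIdeal F L | ∀ M : LieSubalgebra F L, IsCoatom M → (I : Set L) ⊆ M}

/-- `Ñ(L)`: the ideal with `Ñ(L)/φ(L) = Soc (L/φ(L))`. -/
noncomputable def Ntilde : LieIdeal F L :=
  frattini F L ⊔ sSup {A : LieIdeal F L | IsMinModIdeal (frattini F L) A}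

/-- A characteristic ideal: one invariant under all derivations. -/
def IsCharIdeal (J : LieIdeal F L) : Prop :=
  ∀ D : LieDerivation F L L, ∀ x ∈ J, D x ∈ J

/-- The characteristic radical `R_c(L)`: the sum of all solvable characteristic ideals. -/
noncomputable def charRadical : LieIdeal F L :=
  sSup {J : LieIdeal F L | LieAlgebra.IsSolvable J ∧ IsCharIdeal F L J}

/-- A subideal: a subalgebra joined to `L` by a chain of successive ideals. -/
def IsSubideal (S : LieSubalgebra F L) : Prop :=
  ∃ n : ℕ, ∃ c : Fin (n + 1) → LieSubalgebra F L,
    c 0 = S ∧ c (Fin.last n) = ⊤ ∧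
    ∀ i : Fin n, c i.castSucc ≤ c i.succ ∧
      ∀ x ∈ c i.succ, ∀ y ∈ c i.castSucc, ⁅x, y⁆ ∈ c i.castSucc

end MoreDefs


section Proof12

variable {F : Type*} [Field F] {L : Type*} [LieRing L] [LieAlgebra F L]

/-- An ideal of nilpotency class ≤ 2 is a nilpotent Lie algebra. -/
lemma isNilpotent_of_class_two (A : LieIdeal F L)
    (h : ∀ a ∈ A, ∀ b ∈ A, ∀ c ∈ A, ⁅a, ⁅b, c⁆⁆ = (0 : L)) :
    LieModule.IsNilpotent A A := by
  refine LieModule.IsNilpotent.mk (R := F) (L := A) (M := A) (k := 2) ?_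
  have h1 : LieModule.lowerCentralSeries F A A 2 =
      ⁅(⊤ : LieIdeal F A), ⁅(⊤ : LieIdeal F A), (⊤ : LieSubmodule F A A)⁆⁆ := rfl
  rw [h1, LieSubmodule.lie_eq_bot_iff]
  intro x _ m hm
  rw [← LieSubmodule.mem_toSubmodule, LieSubmodule.lieIdeal_oper_eq_linear_span'] at hm
  refine Submodule.span_induction (p := fun m _ => ⁅(x : A), m⁆ = 0) ?_ ?_ ?_ ?_ hm
  · rintro m ⟨b, -, c, -, rfl⟩
    ext
    exact h x x.2 b b.2 c c.2
  · simp
  · intro y z _ _ hy hz; rw [lie_add, hy, hz, add_zero]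
  · intro t y _ hy; rw [lie_smul, hy, smul_zero]

lemma class_two_le_nilrad (A : LieIdeal F L)
    (h : ∀ a ∈ A, ∀ b ∈ A, ∀ c ∈ A, ⁅a, ⁅b, c⁆⁆ = (0 : L)) :
    A ≤ nilrad F L :=
  le_sSup (isNilpotent_of_class_two A h)

lemma nilrad_le_radical [FiniteDimensional F L] :
    nilrad F L ≤ LieAlgebra.radical F L := by
  apply sSup_le
  intro I hI
  have : LieModule.IsNilpotent I I := hI
  rw [← LieIdeal.solvable_iff_le_radical]
  infer_instance

lemma eq_bot_of_perfect_le_nilrad [FiniteDimensional F L] (A : LieIdeal F L)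
    (hA : ⁅A, A⁆ = A) (hle : A ≤ nilrad F L) : A = ⊥ := by
  have hsolv : LieAlgebra.IsSolvable A :=
    (LieIdeal.solvable_iff_le_radical (R := F) (L := L) A).mpr (hle.trans nilrad_le_radical)
  obtain ⟨k, hk⟩ := (LieAlgebra.isSolvable_iff F A).mp hsolv
  rw [LieIdeal.derivedSeries_eq_bot_iff] at hk
  have key : ∀ k, LieAlgebra.derivedSeriesOfIdeal F L k A = A := by
    intro k
    induction k with
    | zero => simp
    | succ k ih => rw [LieAlgebra.derivedSeriesOfIdeal_succ, ih, hA]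
  rw [key k] at hk
  exact hk

lemma mem_ndagger_of_mem_nilrad {x : L} (hx : x ∈ nilrad F L) : x ∈ Ndagger F L :=
  (le_sup_left : LieIdeal.toLieSubalgebra F L (nilrad F L) ≤ Ndagger F L) hx

lemma mem_edagger_of_qm {A : LieIdeal F L} (hA : IsQuasiMinimal A) {x : L} (hx : x ∈ A) :
    x ∈ Edagger F L :=
  LieSubalgebra.subset_lieSpan (Set.mem_iUnion₂.mpr ⟨A, hA, hx⟩)

lemma mem_ndagger_of_qm {A : LieIdeal F L} (hA : IsQuasiMinimal A) {x : L} (hx : x ∈ A) :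
    x ∈ Ndagger F L :=
  (le_sup_right : Edagger F L ≤ Ndagger F L) (mem_edagger_of_qm hA hx)

lemma idealCenter_le (A : LieIdeal F L) : idealCenter A ≤ A := fun _ hx => hx.1

lemma idealCenter_le_nilrad (A : LieIdeal F L) : idealCenter A ≤ nilrad F L :=
  class_two_le_nilrad _ (fun _ _ b hb c hc => by rw [hb.2 c hc.1, lie_zero])

lemma zc_lie_qm [FiniteDimensional F L] {A : LieIdeal F L} (hA : IsQuasiMinimal A)
    {x : L} (hx : x ∈ idealCenter (nilrad F L)) : ∀ a ∈ A, ⁅x, a⁆ = 0 := by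
  rcases hA.2.2 (A ⊓ nilrad F L)
      (le_inf (idealCenter_le A) (idealCenter_le_nilrad A)) inf_le_left with hc | hc
  · -- A ⊓ nilrad = idealCenter A
    have hbr : ∀ a ∈ A, ⁅x, a⁆ ∈ idealCenter A := by
      intro a ha
      rw [← hc, LieSubmodule.mem_inf]
      constructor
      · exact A.lie_mem ha
      · have : ⁅a, x⁆ ∈ nilrad F L := (nilrad F L).lie_mem hx.1
        rw [← lie_skew]
        exact neg_mem this
    intro a ha
    rw [← hA.1] at ha
    rw [← LieSubmodule.mem_toSubmodule, LieSubmodule.lieIdeal_oper_eq_linear_span'] at ha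
    refine Submodule.span_induction (p := fun m _ => ⁅x, m⁆ = 0) ?_ ?_ ?_ ?_ ha
    · rintro m ⟨b, hb, c, hc', rfl⟩
      have h1 := hbr b hb
      have h2 := hbr c hc'
      have hterm2 : ⁅b, ⁅x, c⁆⁆ = (0 : L) := by
        rw [← lie_skew, h2.2 b hb, neg_zero]
      rw [leibniz_lie, h1.2 c hc', hterm2, add_zero]
    · simp
    · intro y z _ _ hy hz; rw [lie_add, hy, hz, add_zero]
    · intro t y _ hy; rw [lie_smul, hy, smul_zero]
  · -- A ⊓ nilrad = A, i.e. A ≤ nilrad, so A = ⊥, contradicting idealCenter A < A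
    exfalso
    have hAb : A = ⊥ := eq_bot_of_perfect_le_nilrad A hA.1 (inf_eq_left.mp hc)
    have hlt := hA.2.1
    rw [hAb] at hlt
    exact not_lt_bot hlt

lemma zc_centralizes_nd [FiniteDimensional F L] {x : L}
    (hx : x ∈ idealCenter (nilrad F L)) : ∀ y ∈ Ndagger F L, ⁅x, y⁆ = 0 := by
  intro y hy
  let K : LieSubalgebra F L :=
    { carrier := {z : L | ⁅x, z⁆ = 0}
      zero_mem' := lie_zero x
      add_mem' := fun {a b} ha hb => by
        simp only [Set.mem_setOf_eq] at *
        rw [lie_add, ha, hb, add_zero]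
      smul_mem' := fun c z hz => by
        simp only [Set.mem_setOf_eq] at *
        rw [lie_smul, hz, smul_zero]
      lie_mem' := fun {a b} ha hb => by
        simp only [Set.mem_setOf_eq] at *
        rw [leibniz_lie, ha, hb, lie_zero, zero_lie, add_zero] }
  have hK : Ndagger F L ≤ K := by
    apply sup_le
    · intro z hz
      exact hx.2 z hz
    · rw [Edagger, LieSubalgebra.lieSpan_le]
      intro z hz
      rw [Set.mem_iUnion₂] at hz
      obtain ⟨A, hA, hzA⟩ := hz
      exact zc_lie_qm hA hx z hzA
  exact hK hy

lemma ndagger_lie_mem (z : L) {y : L} (hy : y ∈ Ndagger F L) : ⁅z, y⁆ ∈ Ndagger F L := by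
  let K : LieSubalgebra F L :=
    { carrier := {y : L | y ∈ Ndagger F L ∧ ∀ w : L, ⁅w, y⁆ ∈ Ndagger F L}
      zero_mem' := ⟨(Ndagger F L).zero_mem, fun w => by
        rw [lie_zero]; exact (Ndagger F L).zero_mem⟩
      add_mem' := fun {a b} ha hb => ⟨(Ndagger F L).add_mem ha.1 hb.1, fun w => by
        rw [lie_add]; exact (Ndagger F L).add_mem (ha.2 w) (hb.2 w)⟩
      smul_mem' := fun c y hy => ⟨(Ndagger F L).smul_mem c hy.1, fun w => by
        rw [lie_smul]; exact (Ndagger F L).smul_mem c (hy.2 w)⟩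
      lie_mem' := fun {a b} ha hb => ⟨(Ndagger F L).lie_mem ha.1 hb.1, fun w => by
        rw [leibniz_lie]
        exact (Ndagger F L).add_mem ((Ndagger F L).lie_mem (ha.2 w) hb.1)
          ((Ndagger F L).lie_mem ha.1 (hb.2 w))⟩ }
  have hK : Ndagger F L ≤ K := by
    apply sup_le
    · intro y hy
      exact ⟨mem_ndagger_of_mem_nilrad hy, fun w =>
        mem_ndagger_of_mem_nilrad ((nilrad F L).lie_mem hy)⟩
    · rw [Edagger, LieSubalgebra.lieSpan_le]
      intro y hy
      rw [Set.mem_iUnion₂] at hy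
      obtain ⟨A, hA, hyA⟩ := hy
      exact ⟨mem_ndagger_of_qm hA hyA, fun w => mem_ndagger_of_qm hA (A.lie_mem hyA)⟩
  exact (hK hy).2 z

/-- The centraliser of `N†(L)` in `L`, as an ideal. -/
def Cnd (F : Type*) [Field F] (L : Type*) [LieRing L] [LieAlgebra F L] : LieIdeal F L where
  carrier := {x : L | ∀ y ∈ Ndagger F L, ⁅x, y⁆ = 0}
  zero_mem' := by intro y hy; simp
  add_mem' := by intro a b ha hb y hy; rw [add_lie, ha y hy, hb y hy, add_zero]
  smul_mem' := by intro c x hx y hy; rw [smul_lie, hx y hy, smul_zero]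
  lie_mem := by
    intro z x hx y hy
    show ⁅⁅z, x⁆, y⁆ = (0 : L)
    rw [lie_lie, hx y hy, hx _ (ndagger_lie_mem z hy), lie_zero, sub_zero]

lemma lie_zc_eq_bot {B : LieIdeal F L} (hB : B ≤ Cnd F L) :
    ⁅B, idealCenter (nilrad F L)⁆ = ⊥ ∧ ⁅idealCenter (nilrad F L), B⁆ = ⊥ := by
  constructor
  · rw [LieSubmodule.lie_eq_bot_iff]
    intro x hxB m hm
    exact hB hxB m (mem_ndagger_of_mem_nilrad hm.1)
  · rw [LieSubmodule.lie_eq_bot_iff]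
    intro x hx m hm
    rw [← lie_skew, hB hm x (mem_ndagger_of_mem_nilrad hx.1), neg_zero]

lemma sup_zc_lie [FiniteDimensional F L] (B : LieIdeal F L) (hB : B ≤ Cnd F L) :
    ⁅B ⊔ idealCenter (nilrad F L), B ⊔ idealCenter (nilrad F L)⁆ = ⁅B, B⁆ := by
  have hZcC : idealCenter (nilrad F L) ≤ Cnd F L :=
    fun x hx y hy => zc_centralizes_nd hx y hy
  have h := lie_zc_eq_bot hB
  have hz := lie_zc_eq_bot hZcC
  rw [LieSubmodule.sup_lie, LieSubmodule.lie_sup, LieSubmodule.lie_sup, h.1, h.2, hz.1]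
  simp

lemma cnd_le_zc [FiniteDimensional F L] : Cnd F L ≤ idealCenter (nilrad F L) := by
  have hZcN : idealCenter (nilrad F L) ≤ nilrad F L := idealCenter_le _
  have hZcC : idealCenter (nilrad F L) ≤ Cnd F L :=
    fun x hx y hy => zc_centralizes_nd hx y hy
  have hmemZc : ∀ x ∈ Cnd F L, x ∈ nilrad F L → x ∈ idealCenter (nilrad F L) :=
    fun x hx hxn => ⟨hxn, fun y hy => hx y (mem_ndagger_of_mem_nilrad hy)⟩
  have hCN : Cnd F L ≤ nilrad F L := by
    by_contra hC
    have hZcltC : idealCenter (nilrad F L) < Cnd F L :=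
      lt_of_le_of_ne hZcC (fun h => hC (h ▸ hZcN))
    obtain ⟨A, ⟨hZcA, hAC⟩, hmin⟩ :=
      (LieSubmodule.wellFoundedLT_of_isArtinian F L L).wf.has_min
        {I : LieIdeal F L | idealCenter (nilrad F L) < I ∧ I ≤ Cnd F L}
        ⟨Cnd F L, hZcltC, le_rfl⟩
    set A' : LieIdeal F L := ⁅A, A⁆ with hA'
    have hA'A : A' ≤ A := LieSubmodule.lie_le_right _ _
    have hA'C : A' ≤ Cnd F L := hA'A.trans hAC
    by_cases hcase : A' ≤ idealCenter (nilrad F L)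
    · have hcl2 : ∀ a ∈ A, ∀ b ∈ A, ∀ c ∈ A, ⁅a, ⁅b, c⁆⁆ = (0 : L) := by
        intro a ha b hb c hc
        have hbc : ⁅b, c⁆ ∈ idealCenter (nilrad F L) :=
          hcase (LieSubmodule.lie_mem_lie hb hc)
        exact hAC ha _ (mem_ndagger_of_mem_nilrad hbc.1)
      have hle : A ≤ idealCenter (nilrad F L) :=
        fun x hx => hmemZc x (hAC hx) (class_two_le_nilrad A hcl2 hx)
      exact absurd hle hZcA.not_ge
    · have hsupS : idealCenter (nilrad F L) < A' ⊔ idealCenter (nilrad F L) :=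
        right_lt_sup.mpr hcase
      have hsupC : A' ⊔ idealCenter (nilrad F L) ≤ Cnd F L := sup_le hA'C hZcC
      have hsupA : A' ⊔ idealCenter (nilrad F L) ≤ A := sup_le hA'A hZcA.le
      have hAeq : A' ⊔ idealCenter (nilrad F L) = A := by
        rcases hsupA.lt_or_eq with h | h
        · exact absurd h (hmin _ ⟨hsupS, hsupC⟩)
        · exact h
      have hperf : ⁅A', A'⁆ = A' := by
        calc ⁅A', A'⁆
            = ⁅A' ⊔ idealCenter (nilrad F L), A' ⊔ idealCenter (nilrad F L)⁆ :=
              (sup_zc_lie A' hA'C).symm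
          _ = ⁅A, A⁆ := by rw [hAeq]
          _ = A' := hA'.symm
      have hZcA'le : idealCenter (nilrad F L) ⊓ A' ≤ idealCenter A' := by
        intro x hx
        rw [LieSubmodule.mem_inf] at hx
        exact ⟨hx.2, fun y hy => by
          rw [← lie_skew, hA'C hy x (mem_ndagger_of_mem_nilrad hx.1.1), neg_zero]⟩
      have hZlt : idealCenter A' < A' := by
        refine lt_of_le_of_ne (idealCenter_le A') (fun h => hcase ?_)
        have hnil : A' ≤ nilrad F L := by
          refine class_two_le_nilrad A' (fun a _ b hb c hc => ?_)
          have hb' : b ∈ idealCenter A' := by rw [h]; exact hb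
          rw [hb'.2 c hc, lie_zero]
        exact fun x hx => hmemZc x (hA'C hx) (hnil hx)
      have hqm : IsQuasiMinimal A' := by
        refine ⟨hperf, hZlt, ?_⟩
        intro B hB1 hB2
        by_cases hBZc : B ≤ idealCenter (nilrad F L)
        · exact Or.inl (le_antisymm
            (fun x hx => hZcA'le ((LieSubmodule.mem_inf _ _ _).mpr ⟨hBZc hx, hB2 hx⟩)) hB1)
        · right
          have hBsup : B ⊔ idealCenter (nilrad F L) = A := by
            have h1 : idealCenter (nilrad F L) < B ⊔ idealCenter (nilrad F L) :=
              right_lt_sup.mpr hBZc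
            have h2 : B ⊔ idealCenter (nilrad F L) ≤ Cnd F L :=
              sup_le (hB2.trans hA'C) hZcC
            have h3 : B ⊔ idealCenter (nilrad F L) ≤ A :=
              sup_le (hB2.trans hA'A) hZcA.le
            rcases h3.lt_or_eq with h | h
            · exact absurd h (hmin _ ⟨h1, h2⟩)
            · exact h
          have hA'B : A' ≤ B := by
            calc A' = ⁅A, A⁆ := hA'
              _ = ⁅B ⊔ idealCenter (nilrad F L), B ⊔ idealCenter (nilrad F L)⁆ := by
                  rw [hBsup]
              _ = ⁅B, B⁆ := sup_zc_lie B (hB2.trans hA'C)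
              _ ≤ B := LieSubmodule.lie_le_right _ _
          exact le_antisymm hB2 hA'B
      have hcl2 : ∀ a ∈ A, ∀ b ∈ A, ∀ c ∈ A, ⁅a, ⁅b, c⁆⁆ = (0 : L) := fun a ha b hb c hc =>
        hAC ha _ (mem_ndagger_of_qm hqm (LieSubmodule.lie_mem_lie hb hc))
      have hle : A ≤ idealCenter (nilrad F L) :=
        fun x hx => hmemZc x (hAC hx) (class_two_le_nilrad A hcl2 hx)
      exact absurd hle hZcA.not_ge
  intro x hx
  exact hmemZc x hx (hCN hx)

end Proof12

/-- `C_L(N†(L)) = Z(N)`; in particular `C_L(N†(L)) ⊆ N†(L)`. -/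
theorem stmt_12 (F : Type*) [Field F] (L : Type*) [LieRing L] [LieAlgebra F L]
    [FiniteDimensional F L] :
    {x : L | ∀ y ∈ Ndagger F L, ⁅x, y⁆ = 0} = (idealCenter (nilrad F L) : Set L) ∧
      {x : L | ∀ y ∈ Ndagger F L, ⁅x, y⁆ = 0} ⊆ (Ndagger F L : Set L) := by
  have heq : {x : L | ∀ y ∈ Ndagger F L, ⁅x, y⁆ = 0} = (idealCenter (nilrad F L) : Set L) := by
    ext x
    simp only [Set.mem_setOf_eq, SetLike.mem_coe]
    exact ⟨fun h => cnd_le_zc (show x ∈ Cnd F L from h),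
      fun h => zc_centralizes_nd h⟩
  refine ⟨heq, ?_⟩
  rw [heq]
  intro x hx
  rw [SetLike.mem_coe] at hx
  exact mem_ndagger_of_mem_nilrad hx.1

end Paper
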